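/- Let f : ℝⁿ → ℝⁿ be continuous, φ : ℝⁿ → ℝ continuous, and suppose there exist a continuously differentiable V : ℝⁿ → ℝ and a constant L such that f(x)·∇V(x) + φ(x) − L ≥ 0 for all x ∈ ℝⁿ. Then for every bounded solution x(t) of ẋ = f(x) (with V(x(t)) bounded in time), liminf_{T→∞} (1/T) ∫₀ᵀ φ(x(t)) dt ≥ L. -/

import Mathlib

open Filter intervalIntegral

/-- lower bound on time averages via a storage function.
If `f·∇V + φ - L ≥ 0` everywhere, then along any bounded solution of `ẋ = f(x)`,
`liminf (1/T) ∫₀ᵀ φ(x(t)) dt ≥ L`. -/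
theorem time_average_lower_bound
    {n : ℕ} (f : (Fin n → ℝ) → (Fin n → ℝ)) (φ : (Fin n → ℝ) → ℝ)
    (V : (Fin n → ℝ) → ℝ) (L : ℝ)
    (hf : Continuous f) (hφ : Continuous φ) (hV : ContDiff ℝ 1 V)
    (hineq : ∀ x : Fin n → ℝ, fderiv ℝ V x (f x) + φ x - L ≥ 0)
    (x : ℝ → (Fin n → ℝ))
    (hsol : ∀ t : ℝ, HasDerivAt x (f (x t)) t)
    (hbdd : ∃ M : ℝ, ∀ t : ℝ, 0 ≤ t → ‖x t‖ ≤ M ∧ |V (x t)| ≤ M) :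
    L ≤ Filter.liminf (fun T : ℝ => (1 / T) * ∫ t in (0:ℝ)..T, φ (x t)) atTop := by
  obtain ⟨M, hM⟩ := hbdd
  have hM0 : 0 ≤ M := le_trans (abs_nonneg _) (hM 0 le_rfl).2
  have hx : Continuous x := continuous_iff_continuousAt.2 fun t => (hsol t).continuousAt
  have hVd : ∀ t, HasDerivAt (fun s => V (x s)) (fderiv ℝ V (x t) (f (x t))) t := fun t =>
    ((hV.differentiable one_ne_zero (x t)).hasFDerivAt).comp_hasDerivAt t (hsol t)
  have hD : Continuous (fun t => fderiv ℝ V (x t) (f (x t))) :=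
    ((hV.continuous_fderiv one_ne_zero).comp hx).clm_apply (hf.comp hx)
  -- upper bound on φ along trajectory
  obtain ⟨y0, -, hy0⟩ := (isCompact_closedBall (0 : Fin n → ℝ) M).exists_isMaxOn
    (Metric.nonempty_closedBall.2 hM0) hφ.continuousOn
  set c := φ y0 with hc
  have hφc : ∀ t : ℝ, 0 ≤ t → φ (x t) ≤ c := by
    intro t ht
    exact hy0 (by simpa [Metric.mem_closedBall, dist_zero_right] using (hM t ht).1)
  have key : ∀ T : ℝ, 0 < T → L - 2 * M / T ≤ (1 / T) * ∫ t in (0:ℝ)..T, φ (x t) := by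
    intro T hT
    have hInt2 : IntervalIntegrable (fun t => φ (x t)) MeasureTheory.volume 0 T :=
      (hφ.comp hx).intervalIntegrable _ _
    have hIntD : IntervalIntegrable (fun t => fderiv ℝ V (x t) (f (x t)))
        MeasureTheory.volume 0 T := hD.intervalIntegrable _ _
    have hmono : (∫ t in (0:ℝ)..T, (L - fderiv ℝ V (x t) (f (x t))))
        ≤ ∫ t in (0:ℝ)..T, φ (x t) := by
      apply intervalIntegral.integral_mono_on hT.le
        ((continuous_const.sub hD).intervalIntegrable _ _) hInt2
      intro t _
      have := hineq (x t); simp only [Pi.sub_apply]; linarith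
    have heq : (∫ t in (0:ℝ)..T, fderiv ℝ V (x t) (f (x t))) = V (x T) - V (x 0) :=
      intervalIntegral.integral_eq_sub_of_hasDerivAt (fun t _ => hVd t) hIntD
    have hsplit : (∫ t in (0:ℝ)..T, (L - fderiv ℝ V (x t) (f (x t))))
        = L * T - (V (x T) - V (x 0)) := by
      rw [intervalIntegral.integral_sub (intervalIntegrable_const) hIntD, heq,
        intervalIntegral.integral_const]
      simp [smul_eq_mul]; ring
    have hb1 := abs_le.1 (hM T hT.le).2
    have hb0 := abs_le.1 (hM 0 le_rfl).2
    have hLT : L * T - 2 * M ≤ ∫ t in (0:ℝ)..T, φ (x t) := by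
      rw [hsplit] at hmono; linarith [hb1.1, hb1.2, hb0.1, hb0.2]
    have hTne : T ≠ 0 := ne_of_gt hT
    have h1 : L - 2 * M / T = (L * T - 2 * M) / T := by field_simp
    have h2 : (1 / T) * (∫ t in (0:ℝ)..T, φ (x t)) = (∫ t in (0:ℝ)..T, φ (x t)) / T := by
      ring
    rw [h1, h2]
    gcongr
  -- coboundedness
  have havgc : ∀ᶠ T in atTop, (1 / T) * (∫ t in (0:ℝ)..T, φ (x t)) ≤ max c 0 := by
    filter_upwards [eventually_gt_atTop (0:ℝ)] with T hT
    have hInt2 : IntervalIntegrable (fun t => φ (x t)) MeasureTheory.volume 0 T :=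
      (hφ.comp hx).intervalIntegrable _ _
    have : (∫ t in (0:ℝ)..T, φ (x t)) ≤ ∫ _t in (0:ℝ)..T, c := by
      apply intervalIntegral.integral_mono_on hT.le hInt2 intervalIntegrable_const
      intro t ht; exact hφc t ht.1
    rw [intervalIntegral.integral_const, smul_eq_mul] at this
    have h2 : (1 / T) * (∫ t in (0:ℝ)..T, φ (x t)) ≤ (1 / T) * ((T - 0) * c) := by
      apply mul_le_mul_of_nonneg_left this (by positivity)
    calc (1 / T) * (∫ t in (0:ℝ)..T, φ (x t)) ≤ (1 / T) * ((T - 0) * c) := h2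
      _ = c := by field_simp; ring
      _ ≤ max c 0 := le_max_left _ _
  have hcob : IsCoboundedUnder (· ≥ ·) atTop
      (fun T : ℝ => (1 / T) * ∫ t in (0:ℝ)..T, φ (x t)) :=
    isCoboundedUnder_ge_of_eventually_le _ havgc
  refine le_of_forall_sub_le fun ε hε => ?_
  refine Filter.le_liminf_of_le hcob ?_
  filter_upwards [eventually_ge_atTop (max 1 (2 * M / ε))] with T hT
  have hT1 : (1:ℝ) ≤ T := le_trans (le_max_left _ _) hT
  have hT0 : 0 < T := lt_of_lt_of_le one_pos hT1
  have h2M : 2 * M / T ≤ ε := by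
    rw [div_le_iff₀ hT0]
    have : 2 * M / ε ≤ T := le_trans (le_max_right _ _) hT
    rw [div_le_iff₀ hε] at this
    linarith [mul_le_mul_of_nonneg_left hT1 hε.le]
  linarith [key T hT0]
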